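/- Complete identifiability: let $\Theta$ be a $p\times p$ positive definite matrix with $\Sigma = \Theta^{-1}$, and let $O \subseteq \{1,\dots,p\}^2$ be symmetric and contain the support of $\Theta$ (i.e. $\Theta_{ij} \neq 0 \Rightarrow (i,j)\in O$). If $\tilde\Theta$ is any positive definite matrix with $\tilde\Theta_{O^c} = 0$ and $[\tilde\Theta^{-1}]_O = \Sigma_O$, then $\tilde\Theta = \Theta$. -/

import Mathlib

open Matrix

/-- **Complete identifiability.** Let `Θ ≻ 0` with `Σ = Θ⁻¹` and let
`O` be a symmetric set of index pairs containing the support of `Θ`.  If `Θ'` is any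
positive definite matrix vanishing on `O^c` whose inverse agrees with `Σ` on `O`,
then `Θ' = Θ`. -/
theorem complete_identifiability (p : ℕ) (Θ Θ' : Matrix (Fin p) (Fin p) ℝ)
    (hΘ : Θ.PosDef) (hΘ' : Θ'.PosDef) (O : Set (Fin p × Fin p))
    (hsym : ∀ i j : Fin p, (i, j) ∈ O → (j, i) ∈ O)
    (hsupp : ∀ i j : Fin p, Θ i j ≠ 0 → (i, j) ∈ O)
    (hzero : ∀ i j : Fin p, (i, j) ∉ O → Θ' i j = 0)
    (hinv : ∀ i j : Fin p, (i, j) ∈ O → Θ'⁻¹ i j = Θ⁻¹ i j) :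
    Θ' = Θ := by
  have hdet : IsUnit Θ.det := isUnit_iff_ne_zero.mpr hΘ.det_pos.ne'
  have hdet' : IsUnit Θ'.det := isUnit_iff_ne_zero.mpr hΘ'.det_pos.ne'
  set A : Matrix (Fin p) (Fin p) ℝ := Θ' - Θ with hA
  set D : Matrix (Fin p) (Fin p) ℝ := Θ'⁻¹ - Θ⁻¹ with hD
  -- trace (A * D) = 0
  have htr : trace (A * D) = 0 := by
    rw [trace, Finset.sum_eq_zero]
    intro i _
    rw [diag_apply, mul_apply, Finset.sum_eq_zero]
    intro j _
    by_cases h : (i, j) ∈ O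
    · have : D j i = 0 := by
        simp [hD, Matrix.sub_apply, hinv j i (hsym i j h)]
      simp [this]
    · have h1 : Θ i j = 0 := by
        by_contra hc; exact h (hsupp i j hc)
      have : A i j = 0 := by simp [hA, Matrix.sub_apply, hzero i j h, h1]
      simp [this]
  -- D = -(Θ'⁻¹ * A * Θ⁻¹)
  have hDeq : D = -(Θ'⁻¹ * A * Θ⁻¹) := by
    have h1 : Θ'⁻¹ * Θ' = 1 := nonsing_inv_mul Θ' hdet'
    have h2 : Θ * Θ⁻¹ = 1 := mul_nonsing_inv Θ hdet
    have : Θ'⁻¹ * A * Θ⁻¹ = Θ⁻¹ - Θ'⁻¹ := by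
      rw [hA, mul_sub, sub_mul, h1, one_mul, mul_assoc, h2, mul_one]
    rw [hD, this, neg_sub]
  have htr2 : trace (A * (Θ'⁻¹ * A * Θ⁻¹)) = 0 := by
    have := htr
    rw [hDeq, mul_neg, trace_neg, neg_eq_zero] at this
    exact this
  -- square roots
  have hSps := hΘ.inv.posSemidef
  have hTps := hΘ'.inv.posSemidef
  open scoped MatrixOrder in set S := CFC.sqrt Θ⁻¹ with hSdef
  open scoped MatrixOrder in set T := CFC.sqrt Θ'⁻¹ with hTdef
  open scoped MatrixOrder in have hSS : S * S = Θ⁻¹ := CFC.sqrt_mul_sqrt_self _ hSps.nonneg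
  open scoped MatrixOrder in have hTT : T * T = Θ'⁻¹ := CFC.sqrt_mul_sqrt_self _ hTps.nonneg
  open scoped MatrixOrder in have hSsym : Sᴴ = S := (CFC.sqrt_nonneg Θ⁻¹).posSemidef.1
  open scoped MatrixOrder in have hTsym : Tᴴ = T := (CFC.sqrt_nonneg Θ'⁻¹).posSemidef.1
  have hAsym : Aᴴ = A := by
    rw [hA, conjTranspose_sub, hΘ.1, hΘ'.1]
  set M : Matrix (Fin p) (Fin p) ℝ := T * A * S with hM
  have hMH : Mᴴ = S * A * T := by
    rw [hM, conjTranspose_mul, conjTranspose_mul, hSsym, hTsym, hAsym, mul_assoc]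
  have htr3 : trace (Mᴴ * M) = 0 := by
    rw [hMH, hM]
    have e1 : S * A * T * (T * A * S) = S * (A * T * (T * A * S)) := by
      noncomm_ring
    have e2 : A * T * (T * A * S) * S = A * (Θ'⁻¹ * A * Θ⁻¹) := by
      rw [← hTT, ← hSS]; noncomm_ring
    rw [e1, trace_mul_comm, e2, htr2]
  -- conclude M = 0
  have hM0 : M = 0 := by
    have : ∀ j ∈ Finset.univ, (Mᴴ * M) j j = 0 := by
      refine fun j _ => le_antisymm ?_ ?_
      · calc (Mᴴ * M) j j ≤ ∑ k, (Mᴴ * M) k k := by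
              refine Finset.single_le_sum (f := fun k => (Mᴴ * M) k k) ?_ (Finset.mem_univ j)
              intro k _
              show 0 ≤ (Mᴴ * M) k k
              rw [mul_apply]
              refine Finset.sum_nonneg fun l _ => ?_
              simp only [conjTranspose_apply, RCLike.star_def, starRingEnd_apply, star_trivial]
              exact mul_self_nonneg _
          _ = 0 := htr3
      · rw [mul_apply]
        refine Finset.sum_nonneg fun l _ => ?_
        simp only [conjTranspose_apply, star_trivial]
        exact mul_self_nonneg _
    ext i j
    have hjj := this j (Finset.mem_univ j)
    rw [mul_apply] at hjj
    have := (Finset.sum_eq_zero_iff_of_nonneg (fun l _ => by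
      simp only [conjTranspose_apply, star_trivial]; exact mul_self_nonneg _)).mp hjj i
      (Finset.mem_univ i)
    simp only [conjTranspose_apply, star_trivial, mul_self_eq_zero] at this
    simpa using this
  -- S, T invertible
  have hdetS : IsUnit S.det := by
    refine isUnit_iff_ne_zero.mpr fun h => ?_
    have : Θ⁻¹.det = 0 := by rw [← hSS, det_mul, h, mul_zero]
    exact hΘ.inv.det_pos.ne' this
  have hdetT : IsUnit T.det := by
    refine isUnit_iff_ne_zero.mpr fun h => ?_
    have : Θ'⁻¹.det = 0 := by rw [← hTT, det_mul, h, mul_zero]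
    exact hΘ'.inv.det_pos.ne' this
  have hA0 : A = 0 := by
    have h1 : T⁻¹ * (T * A * S) * S⁻¹ = A := by
      rw [← mul_assoc, ← mul_assoc, nonsing_inv_mul T hdetT, one_mul, mul_assoc,
        mul_nonsing_inv S hdetS, mul_one]
    rw [← h1, ← hM, hM0, mul_zero, zero_mul]
  have := sub_eq_zero.mp (hA ▸ hA0)
  exact this
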